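/- arXiv:1907.05059 — 2 statements merged into one kernel-verified Lean document; each statement's English description precedes it below -/
import Mathlib

section
/- Let $V$ be a real Banach space and let $(V, \|\cdot\|)$, $B : V \to V^*$ strongly monotone with constant $M_B > 0$, $A : V \to V^*$ bounded linear with $\|Au\|_{V^*} \le L_A \|u\|$, $\tau_0 > 0$ with $\tau_0 L_A < M_B - L_j$ where $L_j \ge 0$. Suppose for $h_1, h_2 \in V$, the elements $u_1, u_2 \in V$ satisfy for all $v \in V$: $\langle Bu_i + \tau_0 A h_i, v - u_i\rangle + j(u_i, v) - j(u_i, u_i) \ge \langle F, v - u_i\rangle$, where $j$ satisfies $j(g_1,v_2)+j(g_2,v_1)-j(g_1,v_1)-j(g_2,v_2) \le L_j\|g_1-g_2\|\|v_1-v_2\|$ for all arguments. Then $(M_B - L_j)\|u_1 - u_2\| \le \tau_0 L_A \|h_1 - h_2\|$; in particular the map $h \mapsto u_h$ is a contraction. -/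
/-- Contraction estimate for the map `h ↦ u_h` in the time-discretized
quasi-variational inequality: `(M_B - L_j)‖u₁ - u₂‖ ≤ τ₀ L_A ‖h₁ - h₂‖`. -/
theorem vi_solution_contraction_in_h
    {V : Type*} [NormedAddCommGroup V] [NormedSpace ℝ V] [CompleteSpace V]
    (B : V → StrongDual ℝ V) (MB : ℝ) (hMB : 0 < MB)
    (hBmono : ∀ u₁ u₂ : V, MB * ‖u₁ - u₂‖ ^ 2 ≤ (B u₁ - B u₂) (u₁ - u₂))
    (A : V →L[ℝ] StrongDual ℝ V) (LA : ℝ)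
    (hA : ∀ u : V, ‖A u‖ ≤ LA * ‖u‖)
    (Lj : ℝ) (hLjnn : 0 ≤ Lj) (τ₀ : ℝ) (hτ₀ : 0 < τ₀)
    (hsmall : τ₀ * LA < MB - Lj)
    (j : V → V → ℝ)
    (hj : ∀ g₁ g₂ v₁ v₂ : V,
      j g₁ v₂ + j g₂ v₁ - j g₁ v₁ - j g₂ v₂ ≤ Lj * ‖g₁ - g₂‖ * ‖v₁ - v₂‖)
    (F : StrongDual ℝ V) (h₁ h₂ u₁ u₂ : V)
    (hvi₁ : ∀ v : V, F (v - u₁) ≤ (B u₁ + τ₀ • A h₁) (v - u₁) + j u₁ v - j u₁ u₁)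
    (hvi₂ : ∀ v : V, F (v - u₂) ≤ (B u₂ + τ₀ • A h₂) (v - u₂) + j u₂ v - j u₂ u₂) :
    (MB - Lj) * ‖u₁ - u₂‖ ≤ τ₀ * LA * ‖h₁ - h₂‖ := by
  set n : ℝ := ‖u₁ - u₂‖ with hn
  have h1 := hvi₁ u₂
  have h2 := hvi₂ u₁
  have hjj := hj u₁ u₂ u₁ u₂
  -- pairing bound
  have hAbd : (A (h₁ - h₂)) (u₂ - u₁) ≤ LA * ‖h₁ - h₂‖ * n := by
    calc (A (h₁ - h₂)) (u₂ - u₁) ≤ ‖A (h₁ - h₂)‖ * ‖u₂ - u₁‖ :=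
          le_trans (le_abs_self _) ((A (h₁ - h₂)).le_opNorm _)
      _ ≤ LA * ‖h₁ - h₂‖ * ‖u₂ - u₁‖ :=
          mul_le_mul_of_nonneg_right (hA _) (norm_nonneg _)
      _ = LA * ‖h₁ - h₂‖ * n := by rw [hn, norm_sub_rev u₂ u₁]
  have hApos : 0 ≤ LA * ‖h₁ - h₂‖ :=
    le_trans (norm_nonneg (A (h₁ - h₂))) (hA _)
  have hAexp : (A (h₁ - h₂)) (u₂ - u₁)
      = ((A h₁) u₂ + (A h₂) u₁) - ((A h₁) u₁ + (A h₂) u₂) := by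
    simp only [map_sub, ContinuousLinearMap.sub_apply]
    ring
  -- key quadratic inequality
  have key : (MB - Lj) * n ^ 2 ≤ τ₀ * (LA * ‖h₁ - h₂‖) * n := by
    have hmono := hBmono u₁ u₂
    simp only [ContinuousLinearMap.add_apply, ContinuousLinearMap.coe_smul',
      Pi.smul_apply, smul_eq_mul, ContinuousLinearMap.sub_apply, map_sub] at h1 h2 hmono
    nlinarith [h1, h2, hjj, hmono, hAbd, hAexp]
  -- conclude
  rcases eq_or_lt_of_le (norm_nonneg (u₁ - u₂)) with h0 | h0
  · rw [← hn] at h0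
    rw [← h0]
    nlinarith [hApos, hτ₀.le]
  · rw [← hn] at h0
    nlinarith [key, h0]
end

section
/- Let $V^*$ be a real Banach space, $\tau > 0$, and $f : \mathbb{R} \to V^*$ twice continuously differentiable. For $k \ge 2$ set $t_k = k\tau$, $f_\tau^k = \tfrac{1}{\tau}\int_{t_{k-1}}^{t_k} f(t)\, dt$, and $F_\tau^k = \tfrac{1}{\tau}(f_\tau^k - f_\tau^{k-1})$. Then $\Big\|\frac{F_\tau^k - F_\tau^{k-1}}{\tau}\Big\|_{V^*} \le \frac{2\sqrt{3}}{\sqrt{\tau}} \Big(\int_{t_k - 3\tau}^{t_k} \|f''(s)\|_{V^*}^2\, ds\Big)^{1/2}$. -/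
open intervalIntegral MeasureTheory Set

/-- Elementary Cauchy–Schwarz for interval integrals of nonnegative continuous functions. -/
lemma cs_interval (g : ℝ → ℝ) (hg : Continuous g) (hgnn : ∀ x, 0 ≤ g x)
    (x y : ℝ) (hxy : x ≤ y) :
    (∫ s in x..y, g s) ≤ Real.sqrt (y - x) * Real.sqrt (∫ s in x..y, g s ^ 2) := by
  set I := ∫ s in x..y, g s with hI
  set J := ∫ s in x..y, g s ^ 2 with hJ
  have hJnn : 0 ≤ J := intervalIntegral.integral_nonneg hxy (fun u _ => sq_nonneg _)
  have key : ∀ c : ℝ, 0 < c → I ≤ (y - x) * (c / 2) + (1 / (2 * c)) * J := by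
    intro c hc
    have hpt : ∀ u ∈ Icc x y, g u ≤ c / 2 + (1 / (2 * c)) * g u ^ 2 := by
      intro u _
      have h2 : g u * (2 * c) ≤ c ^ 2 + g u ^ 2 := by nlinarith [sq_nonneg (g u - c)]
      have h3 : g u ≤ (c ^ 2 + g u ^ 2) / (2 * c) := (le_div_iff₀ (by positivity)).2 h2
      have h4 : (c ^ 2 + g u ^ 2) / (2 * c) = c / 2 + (1 / (2 * c)) * g u ^ 2 := by
        field_simp
      linarith [h3, h4.le]
    have hint1 : IntervalIntegrable g volume x y := hg.intervalIntegrable x y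
    have hint2 : IntervalIntegrable (fun u => c / 2 + (1 / (2 * c)) * g u ^ 2) volume x y := by
      apply Continuous.intervalIntegrable; continuity
    calc I ≤ ∫ u in x..y, (c / 2 + (1 / (2 * c)) * g u ^ 2) :=
          intervalIntegral.integral_mono_on hxy hint1 hint2 hpt
      _ = (y - x) * (c / 2) + (1 / (2 * c)) * J := by
          rw [intervalIntegral.integral_add (by apply Continuous.intervalIntegrable; continuity)
            (by apply Continuous.intervalIntegrable; continuity),
            intervalIntegral.integral_const, intervalIntegral.integral_const_mul]
          simp [hJ, smul_eq_mul]
  rcases eq_or_lt_of_le hxy with rfl | hlt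
  · simp [hI]
  rcases eq_or_lt_of_le hJnn with hJ0 | hJpos
  · have hR : Real.sqrt J = 0 := by rw [← hJ0, Real.sqrt_zero]
    rw [hR, mul_zero]
    refine le_of_forall_pos_le_add ?_
    intro ε hε
    have hyx : (0:ℝ) < y - x := by linarith
    have hc : (0:ℝ) < 2 * ε / (y - x) := by positivity
    have h2 := key _ hc
    rw [← hJ0] at h2
    calc I ≤ (y - x) * ((2 * ε / (y - x)) / 2) + (1 / (2 * (2 * ε / (y - x)))) * 0 := h2
      _ = ε := by
          have hyx' : y - x ≠ 0 := ne_of_gt hyx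
          field_simp
          ring
      _ ≤ 0 + ε := by linarith
  · set r := Real.sqrt (y - x) with hr
    set s := Real.sqrt J with hs
    have hrpos : 0 < r := Real.sqrt_pos.2 (by linarith)
    have hspos : 0 < s := Real.sqrt_pos.2 hJpos
    have hr2 : r * r = y - x := Real.mul_self_sqrt (by linarith)
    have hs2 : s * s = J := Real.mul_self_sqrt hJnn
    have hc : (0:ℝ) < s / r := by positivity
    calc I ≤ (y - x) * ((s / r) / 2) + (1 / (2 * (s / r))) * J := key _ hc
      _ = r * s := by rw [← hr2, ← hs2]; field_simp; ring

/-- Core estimate: the second difference of window integrals of `f` is bounded by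
`τ² ∫_{a-3τ}^{a} ‖f''‖`. -/
lemma triple_bound {E : Type*} [NormedAddCommGroup E] [NormedSpace ℝ E] [CompleteSpace E]
    (τ : ℝ) (hτ : 0 < τ) (f f' f'' : ℝ → E)
    (hderiv : ∀ t, HasDerivAt f (f' t) t)
    (hderiv' : ∀ t, HasDerivAt f' (f'' t) t)
    (hcont : Continuous f'') (a : ℝ) :
    ‖(∫ t in (a - τ)..a, f t) - (∫ t in (a - 2*τ)..(a - τ), f t)
      - ((∫ t in (a - 2*τ)..(a - τ), f t) - (∫ t in (a - 3*τ)..(a - 2*τ), f t))‖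
      ≤ τ^2 * ∫ s in (a - 3*τ)..a, ‖f'' s‖ := by
  have hf'c : Continuous f' := Differentiable.continuous (fun t => (hderiv' t).differentiableAt)
  have hfc : Continuous f := Differentiable.continuous (fun t => (hderiv t).differentiableAt)
  have hFTC : ∀ x y : ℝ, (∫ s in x..y, f' s) = f y - f x := fun x y =>
    intervalIntegral.integral_eq_sub_of_hasDerivAt (fun t _ => hderiv t)
      (hf'c.intervalIntegrable x y)
  have hFTC' : ∀ x y : ℝ, (∫ s in x..y, f'' s) = f' y - f' x := fun x y =>
    intervalIntegral.integral_eq_sub_of_hasDerivAt (fun t _ => hderiv' t)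
      (hcont.intervalIntegrable x y)
  set I := ∫ s in (a - 3*τ)..a, ‖f'' s‖ with hIdef
  -- shift identities
  have hs1 : (∫ t in (a - 2*τ)..(a - τ), f t) = ∫ t in (a - τ)..a, f (t - τ) := by
    rw [intervalIntegral.integral_comp_sub_right f τ]
    congr 1 <;> ring
  have hs2 : (∫ t in (a - 3*τ)..(a - 2*τ), f t) = ∫ t in (a - τ)..a, f (t - 2*τ) := by
    rw [intervalIntegral.integral_comp_sub_right f (2*τ)]
    congr 1 <;> ring
  have hint : ∀ c : ℝ, IntervalIntegrable (fun t => f (t - c)) volume (a - τ) a :=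
    fun c => (hfc.comp (continuous_id.sub continuous_const)).intervalIntegrable _ _
  have hcomb : (∫ t in (a - τ)..a, f t) - (∫ t in (a - 2*τ)..(a - τ), f t)
      - ((∫ t in (a - 2*τ)..(a - τ), f t) - (∫ t in (a - 3*τ)..(a - 2*τ), f t))
      = ∫ t in (a - τ)..a, (f t - f (t - τ) - (f (t - τ) - f (t - 2*τ))) := by
    rw [hs1, hs2,
      intervalIntegral.integral_sub ((hfc.intervalIntegrable _ _).sub (hint τ))
        ((hint τ).sub (hint (2*τ))),
      intervalIntegral.integral_sub (hfc.intervalIntegrable _ _) (hint τ),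
      intervalIntegral.integral_sub (hint τ) (hint (2*τ))]
  -- pointwise representation of the integrand as an integral of f' increments
  have hint' : ∀ t : ℝ, IntervalIntegrable (fun s => f' (s - τ)) volume (t - τ) t :=
    fun t => (hf'c.comp (continuous_id.sub continuous_const)).intervalIntegrable _ _
  have hpt : ∀ t : ℝ, f t - f (t - τ) - (f (t - τ) - f (t - 2*τ))
      = ∫ s in (t - τ)..t, (f' s - f' (s - τ)) := by
    intro t
    rw [intervalIntegral.integral_sub (hf'c.intervalIntegrable _ _) (hint' t),
      intervalIntegral.integral_comp_sub_right f' τ, hFTC, hFTC,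
      show t - τ - τ = t - 2*τ by ring]
  have hInn : (0:ℝ) ≤ I :=
    intervalIntegral.integral_nonneg (by linarith) (fun u _ => norm_nonneg _)
  -- inner bound
  have hbound2 : ∀ s : ℝ, a - 3*τ ≤ s - τ → s ≤ a → ‖f' s - f' (s - τ)‖ ≤ I := by
    intro s h1 h2
    rw [← hFTC' (s - τ) s]
    calc ‖∫ u in (s - τ)..s, f'' u‖ ≤ ∫ u in (s - τ)..s, ‖f'' u‖ :=
          intervalIntegral.norm_integral_le_integral_norm (by linarith)
      _ ≤ I := intervalIntegral.integral_mono_interval h1 (by linarith) h2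
          (Filter.Eventually.of_forall fun u => norm_nonneg _)
          (hcont.norm.intervalIntegrable _ _)
  -- middle bound
  have hbound1 : ∀ t ∈ Set.uIoc (a - τ) a, ‖f t - f (t - τ) - (f (t - τ) - f (t - 2*τ))‖ ≤ I * τ := by
    intro t ht
    rw [Set.uIoc_of_le (by linarith : a - τ ≤ a)] at ht
    rw [hpt t]
    have hb : ∀ s ∈ Set.uIoc (t - τ) t, ‖f' s - f' (s - τ)‖ ≤ I := by
      intro s hs
      rw [Set.uIoc_of_le (by linarith : t - τ ≤ t)] at hs
      exact hbound2 s (by obtain ⟨h1, h2⟩ := ht; obtain ⟨h3, h4⟩ := hs; linarith)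
        (by obtain ⟨h1, h2⟩ := ht; obtain ⟨h3, h4⟩ := hs; linarith)
    calc ‖∫ s in (t - τ)..t, (f' s - f' (s - τ))‖ ≤ I * |t - (t - τ)| :=
          intervalIntegral.norm_integral_le_of_norm_le_const hb
      _ = I * τ := by rw [show t - (t - τ) = τ by ring, abs_of_pos hτ]
  rw [hcomb]
  calc ‖∫ t in (a - τ)..a, (f t - f (t - τ) - (f (t - τ) - f (t - 2*τ)))‖
      ≤ (I * τ) * |a - (a - τ)| := intervalIntegral.norm_integral_le_of_norm_le_const hbound1
    _ = τ^2 * I := by rw [show a - (a - τ) = τ by ring, abs_of_pos hτ]; ring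

/-- Second divided difference of time averages is controlled by the `L²` norm of `f''`:
`‖(F_τ^k - F_τ^{k-1})/τ‖ ≤ (2√3/√τ) (∫_{t_k-3τ}^{t_k} ‖f''‖²)^{1/2}`. -/
theorem second_divided_difference_average_bound
    {E : Type*} [NormedAddCommGroup E] [NormedSpace ℝ E] [CompleteSpace E]
    (τ : ℝ) (hτ : 0 < τ) (f f' f'' : ℝ → E)
    (hderiv : ∀ t, HasDerivAt f (f' t) t)
    (hderiv' : ∀ t, HasDerivAt f' (f'' t) t)
    (hcont : Continuous f'')
    (k : ℕ) (hk : 2 ≤ k)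
    (favg : ℕ → E)
    (hfavg : ∀ m : ℕ, favg m = (1 / τ) • ∫ t in (((m : ℝ) - 1) * τ)..((m : ℝ) * τ), f t)
    (F : ℕ → E)
    (hF : ∀ m : ℕ, F m = (1 / τ) • (favg m - favg (m - 1))) :
    ‖(1 / τ) • (F k - F (k - 1))‖ ≤
      (2 * Real.sqrt 3 / Real.sqrt τ) *
        Real.sqrt (∫ s in ((k : ℝ) * τ - 3 * τ)..((k : ℝ) * τ), ‖f'' s‖ ^ 2) := by
  obtain ⟨n, rfl⟩ : ∃ n, k = n + 2 := ⟨k - 2, by omega⟩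
  set a : ℝ := ((n : ℝ) + 2) * τ with ha
  have hcast : ((n + 2 : ℕ) : ℝ) = (n : ℝ) + 2 := by push_cast; ring
  -- rewrite the three averages
  have hb2a : (((n + 2 : ℕ) : ℝ) - 1) * τ = a - τ := by rw [hcast]; ring
  have hb2b : ((n + 2 : ℕ) : ℝ) * τ = a := by rw [hcast]
  have hb1a : (((n + 1 : ℕ) : ℝ) - 1) * τ = a - 2*τ := by push_cast; ring
  have hb1b : ((n + 1 : ℕ) : ℝ) * τ = a - τ := by push_cast; ring
  have hb0a : (((n : ℕ) : ℝ) - 1) * τ = a - 3*τ := by push_cast; ring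
  have hb0b : ((n : ℕ) : ℝ) * τ = a - 2*τ := by push_cast; ring
  have e2 : favg (n + 2) = (1 / τ) • ∫ t in (a - τ)..a, f t := by
    rw [hfavg (n + 2), hb2a, hb2b]
  have e1 : favg (n + 1) = (1 / τ) • ∫ t in (a - 2*τ)..(a - τ), f t := by
    rw [hfavg (n + 1), hb1a, hb1b]
  have e0 : favg n = (1 / τ) • ∫ t in (a - 3*τ)..(a - 2*τ), f t := by
    rw [hfavg n, hb0a, hb0b]
  have hk1 : n + 2 - 1 = n + 1 := rfl
  have hk2 : n + 1 - 1 = n := rfl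
  set S2 := ∫ t in (a - τ)..a, f t
  set S1 := ∫ t in (a - 2*τ)..(a - τ), f t
  set S0 := ∫ t in (a - 3*τ)..(a - 2*τ), f t
  have hQ : (1 / τ) • (F (n + 2) - F (n + 2 - 1)) = (1 / τ^3) • (S2 - S1 - (S1 - S0)) := by
    rw [hk1, hF (n + 2), hF (n + 1), hk1, hk2, e2, e1, e0]
    have hτ' : τ ≠ 0 := ne_of_gt hτ
    match_scalars <;> field_simp <;> first
      | ring1
      | (exact Or.inl (by ring))
  rw [hQ]
  have hD := triple_bound τ hτ f f' f'' hderiv hderiv' hcont a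
  set I := ∫ s in (a - 3*τ)..a, ‖f'' s‖ with hIdef
  have hInn : (0:ℝ) ≤ I :=
    intervalIntegral.integral_nonneg (by linarith) (fun u _ => norm_nonneg _)
  set J := ∫ s in (a - 3*τ)..a, ‖f'' s‖ ^ 2 with hJdef
  have hCS : I ≤ Real.sqrt (3*τ) * Real.sqrt J := by
    have := cs_interval (fun s => ‖f'' s‖) hcont.norm (fun s => norm_nonneg _)
      (a - 3*τ) a (by linarith)
    rwa [show a - (a - 3*τ) = 3*τ by ring] at this
  have hgoalbounds : ((n + 2 : ℕ) : ℝ) * τ - 3 * τ = a - 3*τ := by rw [hb2b]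
  rw [hgoalbounds, hb2b, ← hJdef]
  have hsτ : (0:ℝ) < Real.sqrt τ := Real.sqrt_pos.2 hτ
  have hττ : Real.sqrt τ * Real.sqrt τ = τ := Real.mul_self_sqrt hτ.le
  have hJnn : (0:ℝ) ≤ Real.sqrt J := Real.sqrt_nonneg _
  have h3 : Real.sqrt (3*τ) = Real.sqrt 3 * Real.sqrt τ := Real.sqrt_mul (by norm_num) τ
  have h3nn : (0:ℝ) ≤ Real.sqrt 3 := Real.sqrt_nonneg _
  calc ‖(1 / τ^3) • (S2 - S1 - (S1 - S0))‖
      = (1 / τ^3) * ‖S2 - S1 - (S1 - S0)‖ := by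
        rw [norm_smul, Real.norm_eq_abs, abs_of_pos (by positivity)]
    _ ≤ (1 / τ^3) * (τ^2 * I) := by
        apply mul_le_mul_of_nonneg_left hD (by positivity)
    _ = I / τ := by field_simp
    _ ≤ (2 * Real.sqrt 3 / Real.sqrt τ) * Real.sqrt J := by
        have hCS' : I ≤ Real.sqrt 3 * Real.sqrt τ * Real.sqrt J := by rw [h3] at hCS; linarith
        have h5 : 2 * Real.sqrt 3 / Real.sqrt τ * Real.sqrt J * τ
            = 2 * (Real.sqrt 3 * Real.sqrt τ * Real.sqrt J) := by
          rw [div_mul_eq_mul_div, div_mul_eq_mul_div, div_eq_iff hsτ.ne']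
          linear_combination (-2 * Real.sqrt 3 * Real.sqrt J) * hττ
        have hXnn : (0:ℝ) ≤ Real.sqrt 3 * Real.sqrt τ * Real.sqrt J := by positivity
        rw [div_le_iff₀ hτ, h5]
        linarith
end
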